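/- Let $\Omega \subseteq \mathbb{R}^n$ be open and convex, let $f : \mathbb{R}^n \to \mathbb{R}$ be differentiable on $\Omega$ with $\nabla f$ Lipschitz continuous on $\Omega$ with constant $L > 0$, let $\mu > 0$, and define the barrier function $\varphi(y) = f(y) - \mu\sum_{i=1}^n \ln y^{(i)}$ for $y > 0$. Let $x \in \Omega$ with $x > 0$ componentwise, let $d \in \mathbb{R}^n$ with $\nabla\varphi(x)^T d < 0$, let $\tau \in (0,1)$ and $\bar\alpha \in (0,1]$ be such that for all $\alpha \in [0,\bar\alpha]$ one has $x + \alpha d \in \Omega$ and $x + \alpha d \ge (1-\tau)x$ componentwise. Set $C := L + \frac{\mu}{2(1-\tau)^2 \min_i (x^{(i)})^2}$. Then for every $\rho \in (0,1)$ and every $\alpha \in (0,\bar\alpha]$ satisfying $\alpha \le \frac{-(1-\rho)\nabla\varphi(x)^T d}{C\|d\|^2}$, the Armijo condition $\varphi(x) - \varphi(x + \alpha d) \ge -\rho\,\alpha\,\nabla\varphi(x)^T d$ holds. -/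

import Mathlib

set_option maxHeartbeats 1000000


open scoped RealInnerProductSpace

lemma euclidean_norm_le_of_abs_le {n : ℕ} (a b : EuclideanSpace ℝ (Fin n)) (c : ℝ) (hc : 0 ≤ c)
    (h : ∀ i, |a i| ≤ c * |b i|) : ‖a‖ ≤ c * ‖b‖ := by
  rw [EuclideanSpace.norm_eq, EuclideanSpace.norm_eq, ← Real.sqrt_sq hc,
    ← Real.sqrt_mul (by positivity)]
  apply Real.sqrt_le_sqrt
  rw [Finset.mul_sum]
  apply Finset.sum_le_sum
  intro i _
  calc ‖a i‖ ^ 2 = |a i| ^ 2 := by rw [Real.norm_eq_abs]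
    _ ≤ (c * |b i|) ^ 2 := pow_le_pow_left₀ (abs_nonneg _) (h i) 2
    _ = c ^ 2 * ‖b i‖ ^ 2 := by rw [mul_pow, Real.norm_eq_abs]

/-- Armijo condition for the logarithmic barrier function: if `∇f` is `L`-Lipschitz on the
open convex set `Ω`, `φ(y) = f(y) - μ ∑ᵢ ln y⁽ⁱ⁾`, `d` is a descent direction for `φ` at `x`,
the fraction-to-the-boundary rule holds for all step sizes up to `ᾱ`, and
`C = L + μ/(2(1-τ)² minᵢ (x⁽ⁱ⁾)²)`, then every step size
`α ≤ -(1-ρ)∇φ(x)ᵀd / (C‖d‖²)` satisfies the Armijo condition. -/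
theorem barrier_armijo_condition
    (n : ℕ) [NeZero n] (Ω : Set (EuclideanSpace ℝ (Fin n)))
    (hΩ : IsOpen Ω) (hconv : Convex ℝ Ω)
    (f : EuclideanSpace ℝ (Fin n) → ℝ) (hdiff : DifferentiableOn ℝ f Ω)
    (L : ℝ) (hL : 0 < L)
    (hLip : ∀ y ∈ Ω, ∀ z ∈ Ω, ‖gradient f y - gradient f z‖ ≤ L * ‖y - z‖)
    (μ : ℝ) (hμ : 0 < μ)
    (φ : EuclideanSpace ℝ (Fin n) → ℝ)
    (hφ : ∀ y : EuclideanSpace ℝ (Fin n), φ y = f y - μ * ∑ i, Real.log (y i))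
    (x : EuclideanSpace ℝ (Fin n)) (hx : x ∈ Ω) (hxpos : ∀ i, 0 < x i)
    (d : EuclideanSpace ℝ (Fin n)) (hdesc : ⟪gradient φ x, d⟫ < 0)
    (τ : ℝ) (hτ : τ ∈ Set.Ioo (0 : ℝ) 1)
    (α' : ℝ) (hα' : α' ∈ Set.Ioc (0 : ℝ) 1)
    (hstep : ∀ α ∈ Set.Icc (0 : ℝ) α',
      x + α • d ∈ Ω ∧ ∀ i, (1 - τ) * x i ≤ (x + α • d) i)
    (C : ℝ) (hC : C = L + μ / (2 * (1 - τ) ^ 2 * ⨅ i, (x i) ^ 2)) :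
    ∀ ρ ∈ Set.Ioo (0 : ℝ) 1, ∀ α : ℝ, 0 < α → α ≤ α' →
      α ≤ -(1 - ρ) * ⟪gradient φ x, d⟫ / (C * ‖d‖ ^ 2) →
      φ x - φ (x + α • d) ≥ -ρ * α * ⟪gradient φ x, d⟫ := by
  obtain ⟨hτ0, hτ1⟩ := hτ
  have h1τ : (0:ℝ) < 1 - τ := by linarith
  set m : ℝ := ⨅ i, (x i) ^ 2 with hm
  have hbdd : BddBelow (Set.range fun i : Fin n => (x i) ^ 2) :=
    (Set.finite_range _).bddBelow
  have hmle : ∀ i, m ≤ (x i) ^ 2 := fun i => ciInf_le hbdd i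
  have hmpos : 0 < m := by
    obtain ⟨i0, hi0⟩ := exists_eq_ciInf_of_finite (f := fun i : Fin n => (x i) ^ 2)
    rw [hm, ← hi0]
    have := hxpos i0
    positivity
  have hden : (0:ℝ) < (1 - τ) ^ 2 * m := by positivity
  have hCpos : 0 < C := by
    rw [hC]
    have : (0:ℝ) < 2 * (1 - τ) ^ 2 * m := by positivity
    exact add_pos hL (div_pos hμ this)
  -- the gradient of φ
  set G : EuclideanSpace ℝ (Fin n) → EuclideanSpace ℝ (Fin n) := fun y =>
    gradient f y - μ • (WithLp.equiv 2 (Fin n → ℝ)).symm (fun i => (y i)⁻¹) with hGdef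
  have hGapp : ∀ y : EuclideanSpace ℝ (Fin n), ∀ i,
      G y i = gradient f y i - μ * (y i)⁻¹ := by
    intro y i; simp [hGdef]
  have hbar : ∀ y : EuclideanSpace ℝ (Fin n), (∀ i, 0 < y i) →
      HasFDerivAt (fun z : EuclideanSpace ℝ (Fin n) => ∑ i, Real.log (z i))
        (∑ i, (y i)⁻¹ • (EuclideanSpace.proj i : EuclideanSpace ℝ (Fin n) →L[ℝ] ℝ)) y := by
    intro y hy
    apply HasFDerivAt.fun_sum
    intro i _
    have h1 := (EuclideanSpace.proj i : EuclideanSpace ℝ (Fin n) →L[ℝ] ℝ).hasFDerivAt (x := y)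
    exact (Real.hasDerivAt_log (ne_of_gt (hy i))).comp_hasFDerivAt y h1
  have hGrad : ∀ y, y ∈ Ω → (∀ i, 0 < y i) → HasGradientAt φ (G y) y := by
    intro y hyΩ hy
    have hfd : HasFDerivAt f (InnerProductSpace.toDual ℝ _ (gradient f y)) y :=
      (((hdiff y hyΩ).differentiableAt (hΩ.mem_nhds hyΩ)).hasGradientAt).hasFDerivAt
    have hb := hbar y hy
    have hcomb : HasFDerivAt φ
        (InnerProductSpace.toDual ℝ _ (gradient f y) -
          μ • ∑ i, (y i)⁻¹ • (EuclideanSpace.proj i : EuclideanSpace ℝ (Fin n) →L[ℝ] ℝ)) y := by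
      rw [show φ = fun z => f z - μ * ∑ i, Real.log (z i) from funext hφ]
      exact hfd.sub (hb.const_smul μ)
    rw [hasGradientAt_iff_hasFDerivAt]
    refine hcomb.congr_fderiv ?_
    apply ContinuousLinearMap.ext
    intro v
    have hproj : ∀ j, (EuclideanSpace.proj j : EuclideanSpace ℝ (Fin n) →L[ℝ] ℝ) v = v j :=
      fun j => rfl
    simp only [InnerProductSpace.toDual_apply_apply, ContinuousLinearMap.sub_apply,
      ContinuousLinearMap.smul_apply, ContinuousLinearMap.sum_apply, hproj,
      PiLp.inner_apply, RCLike.inner_apply, starRingEnd_apply, star_trivial,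
      smul_eq_mul, hGapp]
    rw [Finset.mul_sum, ← Finset.sum_sub_distrib]; exact Finset.sum_congr rfl fun i _ => by ring
  -- Lipschitz constant for G on the shifted region
  set K : ℝ := L + μ / ((1 - τ) ^ 2 * m) with hKdef
  have hK2C : K ≤ 2 * C := by
    rw [hKdef, hC]
    have h1 : μ / ((1 - τ) ^ 2 * m) = 2 * (μ / (2 * (1 - τ) ^ 2 * m)) := by
      field_simp
    rw [h1]; linarith
  have hLipG : ∀ y z : EuclideanSpace ℝ (Fin n), y ∈ Ω → z ∈ Ω →
      (∀ i, (1 - τ) * x i ≤ y i) → (∀ i, (1 - τ) * x i ≤ z i) →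
      ‖G y - G z‖ ≤ K * ‖y - z‖ := by
    intro y z hyΩ hzΩ hy hz
    have hyp : ∀ i, 0 < y i := fun i => lt_of_lt_of_le (by have := hxpos i; positivity) (hy i)
    have hzp : ∀ i, 0 < z i := fun i => lt_of_lt_of_le (by have := hxpos i; positivity) (hz i)
    have key : G y - G z = (gradient f y - gradient f z) -
        μ • ((WithLp.equiv 2 (Fin n → ℝ)).symm (fun i => (y i)⁻¹) -
             (WithLp.equiv 2 (Fin n → ℝ)).symm (fun i => (z i)⁻¹)) := by
      simp only [hGdef, smul_sub]; abel
    rw [key]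
    have hbarLip : ‖(WithLp.equiv 2 (Fin n → ℝ)).symm (fun i => (y i)⁻¹) -
        (WithLp.equiv 2 (Fin n → ℝ)).symm (fun i => (z i)⁻¹)‖ ≤
        ((1 - τ) ^ 2 * m)⁻¹ * ‖y - z‖ := by
      apply euclidean_norm_le_of_abs_le _ _ _ (by positivity)
      intro i
      have happ : ((WithLp.equiv 2 (Fin n → ℝ)).symm (fun i => (y i)⁻¹) -
          (WithLp.equiv 2 (Fin n → ℝ)).symm (fun i => (z i)⁻¹)) i = (y i)⁻¹ - (z i)⁻¹ := rfl
      have happ2 : (y - z) i = y i - z i := rfl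
      rw [happ, happ2]
      have hyzi : (1 - τ) ^ 2 * m ≤ y i * z i := by
        calc (1 - τ) ^ 2 * m ≤ (1 - τ) ^ 2 * (x i) ^ 2 := by
              apply mul_le_mul_of_nonneg_left (hmle i) (by positivity)
          _ = ((1 - τ) * x i) * ((1 - τ) * x i) := by ring
          _ ≤ y i * z i := by
              apply mul_le_mul (hy i) (hz i) (by have := hxpos i; positivity)
                (le_of_lt (hyp i))
      have hinv : (y i)⁻¹ - (z i)⁻¹ = (z i - y i) / (y i * z i) := by
        field_simp [ne_of_gt (hyp i), ne_of_gt (hzp i)]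
      rw [hinv, abs_div]
      rw [abs_of_pos (lt_of_lt_of_le hden hyzi)]
      rw [div_le_iff₀ (lt_of_lt_of_le hden hyzi)]
      calc |z i - y i| = |y i - z i| := abs_sub_comm _ _
        _ = ((1 - τ) ^ 2 * m)⁻¹ * |y i - z i| * ((1 - τ) ^ 2 * m) := by
            field_simp
        _ ≤ ((1 - τ) ^ 2 * m)⁻¹ * |y i - z i| * (y i * z i) := by
            apply mul_le_mul_of_nonneg_left hyzi (by positivity)
    calc ‖(gradient f y - gradient f z) -
        μ • ((WithLp.equiv 2 (Fin n → ℝ)).symm (fun i => (y i)⁻¹) -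
             (WithLp.equiv 2 (Fin n → ℝ)).symm (fun i => (z i)⁻¹))‖
        ≤ ‖gradient f y - gradient f z‖ +
          ‖μ • ((WithLp.equiv 2 (Fin n → ℝ)).symm (fun i => (y i)⁻¹) -
             (WithLp.equiv 2 (Fin n → ℝ)).symm (fun i => (z i)⁻¹))‖ := norm_sub_le _ _
      _ ≤ L * ‖y - z‖ + μ * (((1 - τ) ^ 2 * m)⁻¹ * ‖y - z‖) := by
          apply add_le_add (hLip y hyΩ z hzΩ)
          rw [norm_smul, Real.norm_eq_abs, abs_of_pos hμ]
          exact mul_le_mul_of_nonneg_left hbarLip (le_of_lt hμ)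
      _ = K * ‖y - z‖ := by rw [hKdef]; field_simp
  -- gradient of φ at x
  have hGx : gradient φ x = G x := (hGrad x hx hxpos).gradient
  rw [hGx] at hdesc ⊢
  -- derivative of t ↦ φ (x + t • d)
  have hmemS : ∀ t ∈ Set.Icc (0:ℝ) α', (x + t • d) ∈ Ω ∧ ∀ i, 0 < (x + t • d) i := by
    intro t ht
    obtain ⟨h1, h2⟩ := hstep t ht
    exact ⟨h1, fun i => lt_of_lt_of_le (by have := hxpos i; positivity) (h2 i)⟩
  have hderiv : ∀ t ∈ Set.Icc (0:ℝ) α',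
      HasDerivAt (fun s => φ (x + s • d)) ⟪G (x + t • d), d⟫ t := by
    intro t ht
    obtain ⟨h1, h2⟩ := hmemS t ht
    have hl : HasDerivAt (fun s : ℝ => x + s • d) d t := by
      have := ((hasDerivAt_id t).smul_const d).const_add x
      simpa using this
    have := ((hGrad _ h1 h2).hasFDerivAt).comp_hasDerivAt t hl
    simp [InnerProductSpace.toDual_apply_apply] at this; exact this
  have hdne : d ≠ 0 := by
    intro h
    rw [h] at hdesc
    simp at hdesc
  have hdnorm : (0:ℝ) < ‖d‖ := norm_pos_iff.mpr hdne
  intro ρ hρ α hα0 hαα' hαbound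
  obtain ⟨hρ0, hρ1⟩ := hρ
  set gd : ℝ := ⟪G x, d⟫ with hgd
  -- the auxiliary 1D function
  set ψ : ℝ → ℝ := fun t => φ (x + t • d) - φ x - t * gd - C * ‖d‖ ^ 2 * t ^ 2 with hψ
  have hψderiv : ∀ t ∈ Set.Icc (0:ℝ) α',
      HasDerivAt ψ (⟪G (x + t • d), d⟫ - gd - C * ‖d‖ ^ 2 * (2 * t)) t := by
    intro t ht
    have h1 := hderiv t ht
    have h2 : HasDerivAt (fun s : ℝ => s * gd) gd t := by
      simpa using (hasDerivAt_id t).mul_const gd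
    have h3 : HasDerivAt (fun s : ℝ => C * ‖d‖ ^ 2 * s ^ 2) (C * ‖d‖ ^ 2 * (2 * t)) t := by
      have := (hasDerivAt_pow 2 t).const_mul (C * ‖d‖ ^ 2)
      simpa [mul_comm] using this
    exact ((h1.sub_const (φ x)).sub h2).sub h3
  have hIccsub : Set.Icc (0:ℝ) α ⊆ Set.Icc (0:ℝ) α' := Set.Icc_subset_Icc_right hαα'
  have hanti : AntitoneOn ψ (Set.Icc (0:ℝ) α) := by
    apply antitoneOn_of_deriv_nonpos (convex_Icc 0 α)
    · intro t ht
      exact ((hψderiv t (hIccsub ht)).continuousAt).continuousWithinAt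
    · intro t ht
      rw [interior_Icc] at ht
      exact ((hψderiv t (hIccsub (Set.mem_Icc_of_Ioo ht))).differentiableAt).differentiableWithinAt
    · intro t ht
      rw [interior_Icc] at ht
      have htIcc := hIccsub (Set.mem_Icc_of_Ioo ht)
      rw [(hψderiv t htIcc).deriv]
      have hinner : ⟪G (x + t • d), d⟫ - gd = ⟪G (x + t • d) - G x, d⟫ := by
        rw [hgd, ← inner_sub_left]
      have hGdiff : ‖G (x + t • d) - G x‖ ≤ K * (t * ‖d‖) := by
        have h0' : x + (0:ℝ) • d = x := by simp
        have hx' := hstep 0 (Set.left_mem_Icc.mpr (le_of_lt hα'.1))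
        have hy' := hstep t htIcc
        have := hLipG (x + t • d) x hy'.1 hx (hy'.2) (fun i => by
          have := hx'.2 i
          simpa [h0'] using this)
        calc ‖G (x + t • d) - G x‖ ≤ K * ‖(x + t • d) - x‖ := this
          _ = K * (t * ‖d‖) := by
              rw [add_sub_cancel_left, norm_smul, Real.norm_eq_abs,
                abs_of_pos ht.1]
      have hbound : ⟪G (x + t • d) - G x, d⟫ ≤ K * (t * ‖d‖) * ‖d‖ := by
        calc ⟪G (x + t • d) - G x, d⟫ ≤ ‖G (x + t • d) - G x‖ * ‖d‖ :=
              real_inner_le_norm _ _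
          _ ≤ K * (t * ‖d‖) * ‖d‖ := by
              apply mul_le_mul_of_nonneg_right hGdiff (norm_nonneg d)
      have hKC : K * (t * ‖d‖) * ‖d‖ ≤ C * ‖d‖ ^ 2 * (2 * t) := by
        have hKpos : 0 ≤ K := by
          rw [hKdef]
          have := div_pos hμ hden
          linarith
        have h2Ct : K * t ≤ 2 * C * t := by
          apply mul_le_mul_of_nonneg_right hK2C (le_of_lt ht.1)
        nlinarith [sq_nonneg ‖d‖, norm_nonneg d]
      rw [hinner]
      linarith
  have hψ0 : ψ 0 = 0 := by
    have hx0 : x + (0:ℝ) • d = x := by simp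
    simp [hψ, hx0]
  have hψα : ψ α ≤ 0 := by
    rw [← hψ0]
    apply hanti (Set.left_mem_Icc.mpr (le_of_lt hα0))
      (Set.right_mem_Icc.mpr (le_of_lt hα0)) (le_of_lt hα0)
  -- final arithmetic
  have hdescnt : φ (x + α • d) - φ x ≤ α * gd + C * ‖d‖ ^ 2 * α ^ 2 := by
    have := hψα
    rw [hψ] at this
    simp only at this
    linarith
  have hCd : 0 < C * ‖d‖ ^ 2 := by positivity
  have h4 : α * (C * ‖d‖ ^ 2) ≤ -(1 - ρ) * gd := by
    rw [le_div_iff₀ hCd] at hαbound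
    linarith [hαbound]
  have h5 : C * ‖d‖ ^ 2 * α ^ 2 ≤ -(1 - ρ) * gd * α := by
    have := mul_le_mul_of_nonneg_right h4 (le_of_lt hα0)
    nlinarith
  nlinarith
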